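/- arXiv:0710.1316 — 4 statements merged into one kernel-verified Lean document; each statement's English description precedes it below -/
import Mathlib

section
/- Let A be a free finitely generated abelian group and R an integral domain. If W : A → R satisfies W(0) = 0 and the elliptic net relation W(p+q+s)W(p−q)W(r+s)W(r) + W(q+r+s)W(q−r)W(p+s)W(p) + W(r+p+s)W(r−p)W(q+s)W(q) = 0 for all p, q, r, s ∈ A, then W(−z) = −W(z) for all z ∈ A. -/
/-- An elliptic net: a map `W : A → R` with `W 0 = 0` satisfying the elliptic net relation. -/
def IsEllipticNetOnGroup {A R : Type*} [AddCommGroup A] [CommRing R] (W : A → R) : Prop :=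
  W 0 = 0 ∧ ∀ p q r s : A,
    W (p + q + s) * W (p - q) * W (r + s) * W r +
    W (q + r + s) * W (q - r) * W (p + s) * W p +
    W (r + p + s) * W (r - p) * W (q + s) * W q = 0

theorem ellnet_neg {A R : Type*} [AddCommGroup A] [Module.Free ℤ A] [Module.Finite ℤ A]
    [CommRing R] [IsDomain R] (W : A → R) (hW : IsEllipticNetOnGroup W) :
    ∀ z : A, W (-z) = -W z := by
  obtain ⟨h0, hrel⟩ := hW
  intro z
  have h1 := hrel z z 0 0
  have h2 := hrel (-z) (-z) 0 0
  simp only [add_zero, sub_self, h0, mul_zero, zero_mul, zero_add, add_zero,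
    zero_sub, sub_zero, neg_neg, sub_neg_eq_add, neg_add_cancel, add_neg_cancel] at h1 h2
  have h1' : W z ^ 3 * (W z + W (-z)) = 0 := by linear_combination h1
  have h2' : W (-z) ^ 3 * (W (-z) + W z) = 0 := by linear_combination h2
  rcases mul_eq_zero.mp h1' with hz | hs
  · rcases mul_eq_zero.mp h2' with hnz | hs'
    · have : W z = 0 := pow_eq_zero_iff (by norm_num) |>.mp hz
      have : W (-z) = 0 := pow_eq_zero_iff (n := 3) (by norm_num) |>.mp hnz
      simp_all
    · linear_combination hs'
  · linear_combination hs
end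

section
/- The map W : ℤ → ℤ defined by W(v) = F_{2v} for v > 0, W(v) = −F_{−2v} for v < 0, and W(0) = 0, where F_k denotes the k-th Fibonacci number, is an elliptic net. -/
/-- An elliptic net: a map `W : A → R` with `W 0 = 0` satisfying the elliptic net relation. -/
def IsEllipticNetMap {A R : Type*} [AddCommGroup A] [CommRing R] (W : A → R) : Prop :=
  W 0 = 0 ∧ ∀ p q r s : A,
    W (p + q + s) * W (p - q) * W (r + s) * W r +
    W (q + r + s) * W (q - r) * W (p + s) * W p +
    W (r + p + s) * W (r - p) * W (q + s) * W q = 0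

/-- W(v) = F_{2v} for v > 0, W(v) = -F_{-2v} for v < 0, W(0) = 0. -/
def fibNet (v : ℤ) : ℤ :=
  if 0 < v then (Nat.fib (2 * v).toNat : ℤ)
  else if v < 0 then -(Nat.fib (2 * (-v)).toNat : ℤ)
  else 0

lemma net_aux (x : ℝ) (hx : x ≠ 0) (p q r s : ℤ) :
    (x^(p+q+s) - x^(-(p+q+s))) * (x^(p-q) - x^(-(p-q))) * (x^(r+s) - x^(-(r+s))) * (x^r - x^(-r)) +
    (x^(q+r+s) - x^(-(q+r+s))) * (x^(q-r) - x^(-(q-r))) * (x^(p+s) - x^(-(p+s))) * (x^p - x^(-p)) +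
    (x^(r+p+s) - x^(-(r+p+s))) * (x^(r-p) - x^(-(r-p))) * (x^(q+s) - x^(-(q+s))) * (x^q - x^(-q)) = 0 := by
  have ha := zpow_ne_zero p hx
  have hb := zpow_ne_zero q hx
  have hc := zpow_ne_zero r hx
  have hd := zpow_ne_zero s hx
  simp only [neg_add, neg_sub, zpow_add₀ hx, zpow_sub₀ hx, zpow_neg]
  field_simp
  ring

open Real in
lemma fib_pos_aux (n : ℕ) :
    ((Nat.fib (2 * n) : ℤ) : ℝ) * √5 = (goldenRatio ^ 2) ^ (n : ℤ) - (goldenRatio ^ 2) ^ (-(n : ℤ)) := by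
  have h5 : (√5 : ℝ) ≠ 0 := by positivity
  have hgi : (goldenRatio ^ 2 : ℝ)⁻¹ = goldenConj ^ 2 := by
    rw [← inv_pow, inv_goldenRatio]; ring
  rw [zpow_neg, zpow_natCast, ← inv_pow, hgi, ← pow_mul, ← pow_mul]
  push_cast
  rw [Real.coe_fib_eq]
  field_simp

open Real in
lemma fibNet_cast (v : ℤ) :
    ((fibNet v : ℤ) : ℝ) * √5 = (goldenRatio ^ 2) ^ v - (goldenRatio ^ 2) ^ (-v) := by
  rcases lt_trichotomy 0 v with h | h | h
  · rw [fibNet, if_pos h]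
    have hv : v = ((v.toNat : ℕ) : ℤ) := (Int.toNat_of_nonneg h.le).symm
    rw [hv, show (2 * ((v.toNat : ℕ) : ℤ)).toNat = 2 * v.toNat by omega]
    exact fib_pos_aux v.toNat
  · subst h; simp [fibNet]
  · rw [fibNet, if_neg (by omega), if_pos h]
    set n := (-v).toNat with hn
    have hv : v = -((n : ℕ) : ℤ) := by omega
    rw [hv, show (2 * (-(-((n:ℕ):ℤ)))).toNat = 2 * n by omega]
    push_cast
    rw [neg_mul]
    rw [show (-(-((n:ℕ):ℤ))) = ((n:ℕ):ℤ) by ring]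
    have := fib_pos_aux n
    push_cast at this
    linarith [this]

open Real in
theorem ellnet_fib : IsEllipticNetMap fibNet := by
  constructor
  · simp [fibNet]
  · intro p q r s
    have hx : (goldenRatio ^ 2 : ℝ) ≠ 0 := by positivity
    have h := net_aux (goldenRatio ^ 2) hx p q r s
    simp only [← fibNet_cast] at h
    have h25 : (√5 : ℝ) ^ 4 = 25 := by
      rw [show (√5 : ℝ) ^ 4 = ((√5 : ℝ) ^ 2) ^ 2 by ring, Real.sq_sqrt (by norm_num)]; norm_num
    have h2 : (((fibNet (p + q + s) * fibNet (p - q) * fibNet (r + s) * fibNet r +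
        fibNet (q + r + s) * fibNet (q - r) * fibNet (p + s) * fibNet p +
        fibNet (r + p + s) * fibNet (r - p) * fibNet (q + s) * fibNet q : ℤ)) : ℝ) * (√5)^4 = 0 := by
      push_cast
      linear_combination h
    rw [h25] at h2
    have h3 : ((fibNet (p + q + s) * fibNet (p - q) * fibNet (r + s) * fibNet r +
        fibNet (q + r + s) * fibNet (q - r) * fibNet (p + s) * fibNet p +
        fibNet (r + p + s) * fibNet (r - p) * fibNet (q + s) * fibNet q : ℤ) : ℝ) = 0 := by
      have := mul_eq_zero.mp h2
      rcases this with h' | h'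
      · exact h'
      · norm_num at h'
    exact_mod_cast h3
end

section
/- Let W : ℤ → ℚ be an elliptic net with W(1) = 1, W(2) ≠ 0, W(2), W(3), W(4) integers, and W(2) dividing W(4). Then W(n) is an integer for all n ∈ ℤ. -/
/-- An elliptic net: a map `W : A → R` with `W 0 = 0` satisfying the elliptic net relation. -/
def IsEllipticNetRel {A R : Type*} [AddCommGroup A] [CommRing R] (W : A → R) : Prop :=
  W 0 = 0 ∧ ∀ p q r s : A,
    W (p + q + s) * W (p - q) * W (r + s) * W r +
    W (q + r + s) * W (q - r) * W (p + s) * W p +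
    W (r + p + s) * W (r - p) * W (q + s) * W q = 0

private lemma net_neg (W : ℤ → ℚ) (hW : IsEllipticNetRel W) (h1 : W 1 = 1) (n : ℤ) :
    W (-n) = - W n := by
  obtain ⟨h0, hrel⟩ := hW
  have key : ∀ p : ℤ, W p * W p + W p * W (-p) = 0 := by
    intro p
    have h := hrel p 1 0 0
    simp only [add_zero, zero_add, sub_zero, zero_sub, h0, h1, mul_zero, zero_mul,
      mul_one, one_mul] at h
    linarith
  by_cases hn : W n = 0
  · have h := key (-n)
    rw [neg_neg, hn, mul_zero, add_zero] at h
    rw [hn, neg_zero]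
    exact mul_self_eq_zero.mp h
  · have h := key n
    have h' : W n * (W n + W (-n)) = 0 := by ring_nf; linarith
    rcases mul_eq_zero.mp h' with h'' | h''
    · exact absurd h'' hn
    · linarith

private lemma net_odd (W : ℤ → ℚ) (hW : IsEllipticNetRel W) (h1 : W 1 = 1) (n : ℤ) :
    W (2*n+1) = W (n+2) * W n ^ 3 - W (n-1) * W (n+1) ^ 3 := by
  have hneg := net_neg W hW h1
  obtain ⟨h0, hrel⟩ := hW
  have h := hrel (n+1) n 1 0
  have e1 : n + 1 + n + 0 = 2*n+1 := by ring
  have e2 : n + 1 - n = 1 := by ring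
  have e3 : (1:ℤ) + 0 = 1 := by ring
  have e4 : n + 1 + 0 = n + 1 := by ring
  have e5 : n + 0 = n := by ring
  have e6 : 1 + (n+1) + 0 = n + 2 := by ring
  have e7 : 1 - (n+1) = -n := by ring
  rw [e1, e2, e3, e4, e5, e6, e7, h1, hneg] at h
  linear_combination h

private lemma net_even (W : ℤ → ℚ) (hW : IsEllipticNetRel W) (h1 : W 1 = 1) (n : ℤ) :
    W (2*n) * W 2 = W n * (W (n+2) * W (n-1) ^ 2 - W (n-2) * W (n+1) ^ 2) := by
  have hneg := net_neg W hW h1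
  obtain ⟨h0, hrel⟩ := hW
  have h := hrel (n+1) (n-1) 1 0
  have e1 : n + 1 + (n - 1) + 0 = 2*n := by ring
  have e2 : n + 1 - (n - 1) = 2 := by ring
  have e3 : (1:ℤ) + 0 = 1 := by ring
  have e4 : n - 1 + 1 + 0 = n := by ring
  have e5 : n - 1 - 1 = n - 2 := by ring
  have e6 : n + 1 + 0 = n + 1 := by ring
  have e7 : 1 + (n+1) + 0 = n + 2 := by ring
  have e8 : 1 - (n+1) = -n := by ring
  have e9 : n - 1 + 0 = n - 1 := by ring
  rw [e1, e2, e3, e4, e5, e6, e7, e8, e9, h1, hneg] at h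
  linear_combination h

theorem ellnet_integrality (W : ℤ → ℚ) (hW : IsEllipticNetRel W)
    (h1 : W 1 = 1) (h2ne : W 2 ≠ 0)
    (h2 : ∃ a : ℤ, W 2 = a) (h3 : ∃ b : ℤ, W 3 = b) (h4 : ∃ c : ℤ, W 4 = c)
    (hdvd : ∃ d : ℤ, W 4 = W 2 * d) :
    ∀ n : ℤ, ∃ m : ℤ, W n = m := by
  have hneg := net_neg W hW h1
  have key : ∀ n : ℕ, (∃ m : ℤ, W n = m) ∧ (n % 2 = 0 → ∃ m : ℤ, W n = W 2 * m) := by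
    intro n
    induction n using Nat.strong_induction_on with
    | _ n ih =>
      rcases lt_or_ge n 5 with hn5 | hn5
      · interval_cases n
        · refine ⟨⟨0, ?_⟩, fun _ => ⟨0, ?_⟩⟩ <;> push_cast <;> simp [hW.1]
        · exact ⟨⟨1, by push_cast; simp [h1]⟩, fun h => absurd h (by norm_num)⟩
        · refine ⟨⟨?_, ?_⟩, fun _ => ⟨1, ?_⟩⟩
          · exact h2.choose
          · push_cast; exact_mod_cast h2.choose_spec
          · push_cast; ring
        · refine ⟨⟨h3.choose, ?_⟩, fun h => absurd h (by norm_num)⟩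
          push_cast; exact_mod_cast h3.choose_spec
        · refine ⟨⟨h4.choose, ?_⟩, fun _ => ⟨hdvd.choose, ?_⟩⟩
          · push_cast; exact_mod_cast h4.choose_spec
          · push_cast; exact_mod_cast hdvd.choose_spec
      · rcases Nat.even_or_odd n with ⟨k, hk⟩ | ⟨k, hk⟩
        · -- n = 2k, k ≥ 3
          have hk3 : 3 ≤ k := by omega
          obtain ⟨c, hc, hcd⟩ : ∃ c : ℤ, W k = c ∧ (k % 2 = 0 → ∃ m : ℤ, W k = W 2 * m) := by
            obtain ⟨⟨c, hc⟩, hd⟩ := ih k (by omega)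
            exact ⟨c, hc, hd⟩
          obtain ⟨a, ha, had⟩ : ∃ a : ℤ, W (k-1 : ℕ) = a ∧ ((k-1) % 2 = 0 → ∃ m : ℤ, W (k-1:ℕ) = W 2 * m) := by
            obtain ⟨⟨a, ha⟩, hd⟩ := ih (k-1) (by omega)
            exact ⟨a, ha, hd⟩
          obtain ⟨b, hb, hbd⟩ : ∃ b : ℤ, W (k+1 : ℕ) = b ∧ ((k+1) % 2 = 0 → ∃ m : ℤ, W (k+1:ℕ) = W 2 * m) := by
            obtain ⟨⟨b, hb⟩, hd⟩ := ih (k+1) (by omega)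
            exact ⟨b, hb, hd⟩
          obtain ⟨e, he, hed⟩ : ∃ e : ℤ, W (k-2 : ℕ) = e ∧ ((k-2) % 2 = 0 → ∃ m : ℤ, W (k-2:ℕ) = W 2 * m) := by
            obtain ⟨⟨e, he⟩, hd⟩ := ih (k-2) (by omega)
            exact ⟨e, he, hd⟩
          obtain ⟨f, hf, hfd⟩ : ∃ f : ℤ, W (k+2 : ℕ) = f ∧ ((k+2) % 2 = 0 → ∃ m : ℤ, W (k+2:ℕ) = W 2 * m) := by
            obtain ⟨⟨f, hf⟩, hd⟩ := ih (k+2) (by omega)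
            exact ⟨f, hf, hd⟩
          have heq := net_even W hW h1 (k : ℤ)
          have c1 : ((k:ℤ) - 1) = ((k-1 : ℕ) : ℤ) := by omega
          have c2 : ((k:ℤ) + 1) = ((k+1 : ℕ) : ℤ) := by omega
          have c3 : ((k:ℤ) - 2) = ((k-2 : ℕ) : ℤ) := by omega
          have c4 : ((k:ℤ) + 2) = ((k+2 : ℕ) : ℤ) := by omega
          have cn : (2 * (k:ℤ)) = ((n : ℕ) : ℤ) := by omega
          rw [c1, c2, c3, c4, cn] at heq
          -- now find z with W n = W 2 * z
          obtain ⟨z, hz⟩ : ∃ z : ℤ, W n = W 2 * z := by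
            rcases Nat.even_or_odd k with hke | hko
            · -- k even: k, k±2 even
              have hk0 : k % 2 = 0 := Nat.even_iff.mp hke
              obtain ⟨c', hc'⟩ := hcd hk0
              obtain ⟨e', he'⟩ := hed (by omega)
              obtain ⟨f', hf'⟩ := hfd (by omega)
              refine ⟨c' * (f' * a^2 - e' * b^2), ?_⟩
              have key2 : W n * W 2 = W 2 * ((c' * (f' * a^2 - e' * b^2) : ℤ) : ℚ) * W 2 := by
                rw [heq, hc', he', hf', ha, hb]; push_cast; ring
              exact mul_right_cancel₀ h2ne key2
            · -- k odd: k±1 even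
              have hk1 : k % 2 = 1 := Nat.odd_iff.mp hko
              obtain ⟨a', ha'⟩ := had (by omega)
              obtain ⟨b', hb'⟩ := hbd (by omega)
              refine ⟨c * (f * a'^2 - e * b'^2), ?_⟩
              have key2 : W n * W 2 = W 2 * ((c * (f * a'^2 - e * b'^2) : ℤ) : ℚ) * W 2 := by
                rw [heq, hc, he, hf, ha', hb']; push_cast; ring
              exact mul_right_cancel₀ h2ne key2
          obtain ⟨w, hw⟩ := h2
          exact ⟨⟨w * z, by rw [hz, hw]; push_cast; ring⟩, fun _ => ⟨z, hz⟩⟩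
        · -- n = 2k+1, k ≥ 2
          have hk2 : 2 ≤ k := by omega
          obtain ⟨⟨c, hc⟩, -⟩ := ih k (by omega)
          obtain ⟨⟨a, ha⟩, -⟩ := ih (k-1) (by omega)
          obtain ⟨⟨b, hb⟩, -⟩ := ih (k+1) (by omega)
          obtain ⟨⟨f, hf⟩, -⟩ := ih (k+2) (by omega)
          have heq := net_odd W hW h1 (k : ℤ)
          have c1 : ((k:ℤ) - 1) = ((k-1 : ℕ) : ℤ) := by omega
          have c2 : ((k:ℤ) + 1) = ((k+1 : ℕ) : ℤ) := by omega
          have c4 : ((k:ℤ) + 2) = ((k+2 : ℕ) : ℤ) := by omega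
          have cn : (2 * (k:ℤ) + 1) = ((n : ℕ) : ℤ) := by omega
          rw [c1, c2, c4, cn] at heq
          refine ⟨⟨f * c^3 - a * b^3, ?_⟩, fun h => by omega⟩
          rw [heq, hc, ha, hb, hf]; push_cast; ring
  intro n
  rcases le_or_gt 0 n with hn | hn
  · obtain ⟨m, hm⟩ := (key n.toNat).1
    exact ⟨m, by rwa [Int.toNat_of_nonneg hn] at hm⟩
  · obtain ⟨m, hm⟩ := (key (-n).toNat).1
    have h' : ((-n).toNat : ℤ) = -n := Int.toNat_of_nonneg (by omega)
    refine ⟨-m, ?_⟩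
    have := hneg (-n)
    rw [neg_neg] at this
    rw [h'] at hm
    rw [this, hm]
    push_cast; ring
end

section
/- Fix a lattice Λ ⊂ ℂ with quasi-period homomorphism η : Λ → ℂ and the sign λ(ω) = 1 if ω ∈ 2Λ, λ(ω) = −1 otherwise. Using the sigma transformation σ(z+ω) = λ(ω) e^{η(ω)(z + ω/2)} σ(z), the function Ω_v(z_1,...,z_n) = σ(∑ v_i z_i) / ( ∏_i σ(z_i)^{2v_i² − ∑_j v_i v_j} ∏_{i<j} σ(z_i+z_j)^{v_i v_j} ) is elliptic in each variable: Ω_v(z_1 + ω, z_2, ..., z_n) = Ω_v(z_1, ..., z_n) for all ω ∈ Λ. -/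
open Classical in
/-- The sign λ(ω): 1 if ω ∈ 2Λ, −1 otherwise. -/
noncomputable def lamSign (Λ : Submodule ℤ ℂ) (ω : Λ) : ℂ :=
  if ∃ u : Λ, (ω : ℂ) = 2 * (u : ℂ) then 1 else -1

lemma lamSign_eq_or (Λ : Submodule ℤ ℂ) (ω : Λ) : lamSign Λ ω = 1 ∨ lamSign Λ ω = -1 := by
  by_cases h : ∃ u : Λ, ((ω : ℂ)) = 2 * (u : ℂ)
  · left; unfold lamSign; exact if_pos h
  · right; unfold lamSign; exact if_neg h

lemma lamSign_ne (Λ : Submodule ℤ ℂ) (ω : Λ) : lamSign Λ ω ≠ 0 := by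
  rcases lamSign_eq_or Λ ω with h | h <;> simp [h]

lemma lamSign_mul_self (Λ : Submodule ℤ ℂ) (ω : Λ) : lamSign Λ ω * lamSign Λ ω = 1 := by
  rcases lamSign_eq_or Λ ω with h | h <;> simp [h]

lemma lamSign_zpow_even (Λ : Submodule ℤ ℂ) (ω : Λ) {m : ℤ} (hm : Even m) :
    lamSign Λ ω ^ m = 1 := by
  obtain ⟨c, rfl⟩ := hm
  rw [zpow_add₀ (lamSign_ne Λ ω), ← mul_zpow, lamSign_mul_self, one_zpow]

lemma lamSign_zpow_sq (Λ : Submodule ℤ ℂ) (ω : Λ) (m : ℤ) :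
    lamSign Λ ω ^ m = lamSign Λ ω ^ (m ^ 2) := by
  rcases Int.even_or_odd m with he | ho
  · rw [lamSign_zpow_even Λ ω he, lamSign_zpow_even Λ ω (by rw [sq]; exact he.mul_right m)]
  · rcases lamSign_eq_or Λ ω with h | h
    · rw [h, one_zpow, one_zpow]
    · rw [h, Odd.neg_one_zpow ho, Odd.neg_one_zpow (ho.pow)]

lemma lamSign_zsmul (Λ : Submodule ℤ ℂ) (ω : Λ) (m : ℤ) :
    lamSign Λ (m • ω) = lamSign Λ ω ^ m := by
  rcases Int.even_or_odd m with hm | hm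
  · obtain ⟨c, hc⟩ := hm
    have h1 : ∃ u : Λ, ((m • ω : Λ) : ℂ) = 2 * (u : ℂ) := by
      refine ⟨c • ω, ?_⟩
      push_cast [zsmul_eq_mul]
      rw [hc]; push_cast; ring
    rw [show lamSign Λ (m • ω) = 1 by unfold lamSign; exact if_pos h1, lamSign_zpow_even Λ ω ⟨c, hc⟩]
  · obtain ⟨c, hc⟩ := hm
    have key : (∃ u : Λ, ((m • ω : Λ) : ℂ) = 2 * (u : ℂ)) ↔ (∃ u : Λ, (ω : ℂ) = 2 * (u : ℂ)) := by
      constructor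
      · rintro ⟨u, hu⟩
        refine ⟨u - c • ω, ?_⟩
        push_cast [zsmul_eq_mul] at hu ⊢
        rw [hc] at hu; push_cast at hu
        linear_combination hu
      · rintro ⟨u, hu⟩
        refine ⟨c • ω + u, ?_⟩
        push_cast [zsmul_eq_mul]
        rw [hc]; push_cast
        linear_combination hu
    by_cases h : ∃ u : Λ, (ω : ℂ) = 2 * (u : ℂ)
    · rw [show lamSign Λ (m • ω) = 1 by unfold lamSign; exact if_pos (key.mpr h),
        show lamSign Λ ω = 1 by unfold lamSign; exact if_pos h, one_zpow]
    · rw [show lamSign Λ (m • ω) = -1 by unfold lamSign; exact if_neg (fun hh => h (key.mp hh)),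
        show lamSign Λ ω = -1 by unfold lamSign; exact if_neg h, Odd.neg_one_zpow ⟨c, hc⟩]

lemma prod_zpow_aux {γ : Type*} (s : Finset γ) {a : ℂ} (ha : a ≠ 0) (f : γ → ℤ) :
    ∏ j ∈ s, a ^ f j = a ^ (∑ j ∈ s, f j) := by
  induction s using Finset.cons_induction with
  | empty => simp
  | cons x s hx ih => rw [Finset.prod_cons, Finset.sum_cons, zpow_add₀ ha, ih]

lemma div_aux {C G N D1 D2 : ℂ} (hC : C ≠ 0) (hG : G ≠ 0) :
    (C * G) * N / ((C * D1) * (G * D2)) = N / (D1 * D2) := by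
  rw [show (C * D1) * (G * D2) = (C * G) * (D1 * D2) by ring,
    mul_div_mul_left _ _ (mul_ne_zero hC hG)]

/-- The net function Ω_v attached to σ and points z₁, …, z_n. -/
noncomputable def OmegaFun {n : ℕ} (σ : ℂ → ℂ) (z : Fin n → ℂ) (v : Fin n → ℤ) : ℂ :=
  σ (∑ i, (v i : ℂ) * z i) /
    ((∏ i, σ (z i) ^ (2 * v i ^ 2 - ∑ j, v i * v j)) *
      ∏ p ∈ Finset.univ.filter (fun p : Fin n × Fin n => p.1 < p.2),
        σ (z p.1 + z p.2) ^ (v p.1 * v p.2))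

theorem omegaFun_elliptic_in_each_variable (Λ : Submodule ℤ ℂ) [DiscreteTopology Λ]
    [IsZLattice ℝ Λ] (η : Λ →+ ℂ) (σ : ℂ → ℂ)
    (hσ : ∀ (w : ℂ) (ω : Λ),
      σ (w + (ω : ℂ)) = lamSign Λ ω * Complex.exp (η ω * (w + (ω : ℂ) / 2)) * σ w)
    (hlam : ∀ ω₁ ω₂ : Λ,
      lamSign Λ (ω₁ + ω₂) * lamSign Λ (ω₁ - ω₂) = lamSign Λ ω₁ ^ 2 * lamSign Λ ω₂ ^ 2)
    {n : ℕ} (z : Fin n → ℂ)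
    (hz : ∀ i, σ (z i) ≠ 0)
    (hz2 : ∀ i j : Fin n, i ≠ j → σ (z i + z j) ≠ 0) :
    ∀ (v : Fin n → ℤ) (k : Fin n) (ω : Λ),
      OmegaFun σ (Function.update z k (z k + (ω : ℂ))) v = OmegaFun σ z v := by
  intro v k ω
  have hco : ∀ m : ℤ, ((m • ω : Λ) : ℂ) = (m : ℂ) * (ω : ℂ) := by
    intro m; push_cast [zsmul_eq_mul]; ring
  have hAne : lamSign Λ ω ≠ 0 := lamSign_ne Λ ω
  -- numerator
  have hsum : ∑ i, (v i : ℂ) * Function.update z k (z k + (ω : ℂ)) i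
      = (∑ i, (v i : ℂ) * z i) + ((v k • ω : Λ) : ℂ) := by
    rw [hco]
    have h1 : ∀ i ∈ Finset.univ, (v i : ℂ) * Function.update z k (z k + (ω : ℂ)) i
        = (v i : ℂ) * z i + (if i = k then (v k : ℂ) * (ω : ℂ) else 0) := by
      intro i _
      by_cases h : i = k
      · subst h; simp [Function.update_self, mul_add]
      · simp [Function.update_of_ne h, h]
    rw [Finset.sum_congr rfl h1, Finset.sum_add_distrib,
      Finset.sum_ite_eq' Finset.univ k (fun _ => (v k : ℂ) * (ω : ℂ))]
    simp
  have hnum : σ (∑ i, (v i : ℂ) * Function.update z k (z k + (ω : ℂ)) i)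
      = lamSign Λ ((v k) • ω) *
          Complex.exp (η ((v k) • ω) * ((∑ i, (v i : ℂ) * z i) + ((v k • ω : Λ) : ℂ) / 2)) *
        σ (∑ i, (v i : ℂ) * z i) := by
    rw [hsum, hσ]
  -- first denominator product
  have hD1 : (∏ i, σ (Function.update z k (z k + (ω : ℂ)) i) ^ (2 * v i ^ 2 - ∑ j, v i * v j))
      = (lamSign Λ ω * Complex.exp (η ω * (z k + (ω : ℂ) / 2))) ^ (2 * v k ^ 2 - ∑ j, v k * v j) *
        ∏ i, σ (z i) ^ (2 * v i ^ 2 - ∑ j, v i * v j) := by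
    have step : ∀ i ∈ Finset.univ,
        σ (Function.update z k (z k + (ω : ℂ)) i) ^ (2 * v i ^ 2 - ∑ j, v i * v j)
        = (if i = k then
            (lamSign Λ ω * Complex.exp (η ω * (z k + (ω : ℂ) / 2))) ^ (2 * v i ^ 2 - ∑ j, v i * v j)
          else 1) * σ (z i) ^ (2 * v i ^ 2 - ∑ j, v i * v j) := by
      intro i _
      by_cases h : i = k
      · subst h
        rw [Function.update_self, hσ, mul_zpow, if_pos rfl]
      · rw [Function.update_of_ne h, if_neg h, one_mul]
    rw [Finset.prod_congr rfl step, Finset.prod_mul_distrib, Finset.prod_ite_eq',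
      if_pos (Finset.mem_univ k)]
  -- pairs product
  have hD2 : (∏ p ∈ Finset.univ.filter (fun p : Fin n × Fin n => p.1 < p.2),
        σ (Function.update z k (z k + (ω : ℂ)) p.1 + Function.update z k (z k + (ω : ℂ)) p.2)
          ^ (v p.1 * v p.2))
      = (∏ j ∈ Finset.univ.erase k,
          (lamSign Λ ω * Complex.exp (η ω * (z k + z j + (ω : ℂ) / 2))) ^ (v k * v j)) *
        ∏ p ∈ Finset.univ.filter (fun p : Fin n × Fin n => p.1 < p.2),
          σ (z p.1 + z p.2) ^ (v p.1 * v p.2) := by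
    have step : ∀ p ∈ Finset.univ.filter (fun p : Fin n × Fin n => p.1 < p.2),
        σ (Function.update z k (z k + (ω : ℂ)) p.1 + Function.update z k (z k + (ω : ℂ)) p.2)
          ^ (v p.1 * v p.2)
        = (if p.1 = k ∨ p.2 = k then
            (lamSign Λ ω * Complex.exp (η ω * (z p.1 + z p.2 + (ω : ℂ) / 2))) ^ (v p.1 * v p.2)
          else 1) * σ (z p.1 + z p.2) ^ (v p.1 * v p.2) := by
      intro p hp
      rw [Finset.mem_filter] at hp
      have hne : p.1 ≠ p.2 := ne_of_lt hp.2
      by_cases h1 : p.1 = k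
      · have h2 : p.2 ≠ k := fun h => hne (h1.trans h.symm)
        rw [h1, Function.update_self, Function.update_of_ne h2,
          show z k + (ω : ℂ) + z p.2 = z k + z p.2 + (ω : ℂ) from by ring, hσ, mul_zpow,
          if_pos (Or.inl rfl)]
      · by_cases h2 : p.2 = k
        · rw [h2, Function.update_of_ne h1, Function.update_self,
            show z p.1 + (z k + (ω : ℂ)) = z p.1 + z k + (ω : ℂ) from by ring, hσ, mul_zpow,
            if_pos (Or.inr rfl)]
        · rw [Function.update_of_ne h1, Function.update_of_ne h2,
            if_neg (by simp [h1, h2]), one_mul]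
    rw [Finset.prod_congr rfl step, Finset.prod_mul_distrib]
    congr 1
    rw [← Finset.prod_filter]
    have hset : (Finset.univ.filter (fun p : Fin n × Fin n => p.1 < p.2)).filter
          (fun p => p.1 = k ∨ p.2 = k)
        = (Finset.univ.filter fun p : Fin n × Fin n => p.1 < p.2 ∧ p.1 = k)
          ∪ (Finset.univ.filter fun p : Fin n × Fin n => p.1 < p.2 ∧ p.2 = k) := by
      ext p
      simp only [Finset.mem_filter, Finset.mem_union, Finset.mem_univ, true_and,
        Finset.filter_filter]
      tauto
    have hdisj : Disjoint
        (Finset.univ.filter fun p : Fin n × Fin n => p.1 < p.2 ∧ p.1 = k)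
        (Finset.univ.filter fun p : Fin n × Fin n => p.1 < p.2 ∧ p.2 = k) := by
      rw [Finset.disjoint_left]
      intro p hp1 hp2
      simp only [Finset.mem_filter, Finset.mem_univ, true_and] at hp1 hp2
      have := hp1.1
      rw [hp1.2, hp2.2] at this
      exact lt_irrefl _ this
    have hbij1 : ∏ p ∈ Finset.univ.filter (fun p : Fin n × Fin n => p.1 < p.2 ∧ p.1 = k),
        (lamSign Λ ω * Complex.exp (η ω * (z p.1 + z p.2 + (ω : ℂ) / 2))) ^ (v p.1 * v p.2)
        = ∏ j ∈ Finset.univ.filter (fun j => k < j),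
          (lamSign Λ ω * Complex.exp (η ω * (z k + z j + (ω : ℂ) / 2))) ^ (v k * v j) := by
      refine Finset.prod_bij' (fun p _ => p.2) (fun j _ => (k, j)) ?_ ?_ ?_ ?_ ?_
      · intro p hp; simp only [Finset.mem_filter, Finset.mem_univ, true_and] at hp ⊢
        rw [← hp.2]; exact hp.1
      · intro j hj; simp only [Finset.mem_filter, Finset.mem_univ, true_and] at hj ⊢
        exact ⟨hj, trivial⟩
      · intro p hp; simp only [Finset.mem_filter, Finset.mem_univ, true_and] at hp
        obtain ⟨a, b⟩ := p; simp only at hp ⊢; rw [hp.2]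
      · intro j _; rfl
      · intro p hp; simp only [Finset.mem_filter, Finset.mem_univ, true_and] at hp
        rw [hp.2]
    have hbij2 : ∏ p ∈ Finset.univ.filter (fun p : Fin n × Fin n => p.1 < p.2 ∧ p.2 = k),
        (lamSign Λ ω * Complex.exp (η ω * (z p.1 + z p.2 + (ω : ℂ) / 2))) ^ (v p.1 * v p.2)
        = ∏ j ∈ Finset.univ.filter (fun j => j < k),
          (lamSign Λ ω * Complex.exp (η ω * (z k + z j + (ω : ℂ) / 2))) ^ (v k * v j) := by
      refine Finset.prod_bij' (fun p _ => p.1) (fun j _ => (j, k)) ?_ ?_ ?_ ?_ ?_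
      · intro p hp; simp only [Finset.mem_filter, Finset.mem_univ, true_and] at hp ⊢
        rw [← hp.2]; exact hp.1
      · intro j hj; simp only [Finset.mem_filter, Finset.mem_univ, true_and] at hj ⊢
        exact ⟨hj, trivial⟩
      · intro p hp; simp only [Finset.mem_filter, Finset.mem_univ, true_and] at hp
        obtain ⟨a, b⟩ := p; simp only at hp ⊢; rw [hp.2]
      · intro j _; rfl
      · intro p hp; simp only [Finset.mem_filter, Finset.mem_univ, true_and] at hp
        rw [hp.2, mul_comm (v p.1) (v k), add_comm (z p.1) (z k)]
    have hdisj2 : Disjoint (Finset.univ.filter (fun j : Fin n => k < j))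
        (Finset.univ.filter (fun j : Fin n => j < k)) := by
      rw [Finset.disjoint_left]
      intro j h1 h2
      simp only [Finset.mem_filter, Finset.mem_univ, true_and] at h1 h2
      exact lt_irrefl k (h1.trans h2)
    have hset2 : Finset.univ.filter (fun j : Fin n => k < j)
          ∪ Finset.univ.filter (fun j : Fin n => j < k) = Finset.univ.erase k := by
      ext j
      simp only [Finset.mem_union, Finset.mem_filter, Finset.mem_erase, Finset.mem_univ,
        true_and, and_true]
      constructor
      · rintro (h | h)
        · exact h.ne'
        · exact h.ne
      · intro h
        exact (h.lt_or_gt).symm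
    rw [hset, Finset.prod_union hdisj, hbij1, hbij2, ← Finset.prod_union hdisj2, hset2]
  -- the key scalar identity
  have hgprod : (∏ j ∈ Finset.univ.erase k,
      (lamSign Λ ω * Complex.exp (η ω * (z k + z j + (ω : ℂ) / 2))) ^ (v k * v j))
      = lamSign Λ ω ^ (∑ j ∈ Finset.univ.erase k, v k * v j) *
        Complex.exp (∑ j ∈ Finset.univ.erase k,
          ((v k * v j : ℤ) : ℂ) * (η ω * (z k + z j + (ω : ℂ) / 2))) := by
    have h1 : ∀ j ∈ Finset.univ.erase k,
        (lamSign Λ ω * Complex.exp (η ω * (z k + z j + (ω : ℂ) / 2))) ^ (v k * v j)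
        = lamSign Λ ω ^ (v k * v j) *
          Complex.exp (((v k * v j : ℤ) : ℂ) * (η ω * (z k + z j + (ω : ℂ) / 2))) := by
      intro j _
      rw [mul_zpow, Complex.exp_int_mul]
    rw [Finset.prod_congr rfl h1, Finset.prod_mul_distrib, prod_zpow_aux _ hAne,
      ← Complex.exp_sum]
  have hsumexp : (2 * v k ^ 2 - ∑ j, v k * v j) + (∑ j ∈ Finset.univ.erase k, v k * v j)
      = v k ^ 2 := by
    rw [Finset.sum_erase_eq_sub (Finset.mem_univ k)]; ring
  have hA2 : lamSign Λ ω ^ (v k)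
      = lamSign Λ ω ^ (2 * v k ^ 2 - ∑ j, v k * v j) *
        lamSign Λ ω ^ (∑ j ∈ Finset.univ.erase k, v k * v j) := by
    rw [← zpow_add₀ hAne, hsumexp, ← lamSign_zpow_sq]
  have hexp : (v k : ℂ) * η ω * ((∑ i, (v i : ℂ) * z i) + (v k : ℂ) * (ω : ℂ) / 2)
      = ((2 * v k ^ 2 - ∑ j, v k * v j : ℤ) : ℂ) * (η ω * (z k + (ω : ℂ) / 2))
        + ∑ j ∈ Finset.univ.erase k,
            ((v k * v j : ℤ) : ℂ) * (η ω * (z k + z j + (ω : ℂ) / 2)) := by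
    rw [Finset.sum_erase_eq_sub (Finset.mem_univ k)]
    have hfull : ∑ j, ((v k * v j : ℤ) : ℂ) * (η ω * (z k + z j + (ω : ℂ) / 2))
        = (v k : ℂ) * η ω * ((z k + (ω : ℂ) / 2) * (∑ j, (v j : ℂ)) + ∑ j, (v j : ℂ) * z j) := by
      have h2 : ∀ j ∈ Finset.univ, ((v k * v j : ℤ) : ℂ) * (η ω * (z k + z j + (ω : ℂ) / 2))
          = (v k : ℂ) * η ω * ((z k + (ω : ℂ) / 2) * (v j : ℂ))
            + (v k : ℂ) * η ω * ((v j : ℂ) * z j) := by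
        intro j _; push_cast; ring
      rw [Finset.sum_congr rfl h2, Finset.sum_add_distrib, ← Finset.mul_sum, ← Finset.mul_sum,
        ← Finset.mul_sum]
      ring
    rw [hfull]
    push_cast
    rw [← Finset.mul_sum]
    ring
  have key : lamSign Λ ((v k) • ω) *
      Complex.exp (η ((v k) • ω) * ((∑ i, (v i : ℂ) * z i) + ((v k • ω : Λ) : ℂ) / 2))
      = (lamSign Λ ω * Complex.exp (η ω * (z k + (ω : ℂ) / 2))) ^ (2 * v k ^ 2 - ∑ j, v k * v j) *
        ∏ j ∈ Finset.univ.erase k,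
          (lamSign Λ ω * Complex.exp (η ω * (z k + z j + (ω : ℂ) / 2))) ^ (v k * v j) := by
    rw [hgprod, mul_zpow, ← Complex.exp_int_mul, lamSign_zsmul Λ ω (v k), map_zsmul η (v k) ω,
      zsmul_eq_mul, hco, hA2, hexp, Complex.exp_add]
    ring
  -- assemble
  have hC : (lamSign Λ ω * Complex.exp (η ω * (z k + (ω : ℂ) / 2)))
      ^ (2 * v k ^ 2 - ∑ j, v k * v j) ≠ 0 :=
    zpow_ne_zero _ (mul_ne_zero hAne (Complex.exp_ne_zero _))
  have hG : (∏ j ∈ Finset.univ.erase k,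
      (lamSign Λ ω * Complex.exp (η ω * (z k + z j + (ω : ℂ) / 2))) ^ (v k * v j)) ≠ 0 :=
    Finset.prod_ne_zero_iff.mpr fun j _ =>
      zpow_ne_zero _ (mul_ne_zero hAne (Complex.exp_ne_zero _))
  simp only [OmegaFun]
  rw [hnum, hD1, hD2, key]
  exact div_aux hC hG
end
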